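/- For every integer n ≥ 1, the n-th Pell number has the complex factorization P_n = ∏_{k=1}^{n−1} (2 − 2i·cos(kπ/n)), where i = √−1. -/

import Mathlib

/-- Pell numbers: `P 0 = 0`, `P 1 = 1`, `P (k+2) = 2 * P (k+1) + P k`. -/
def pell : ℕ → ℕ
  | 0 => 0
  | 1 => 1
  | (k + 2) => 2 * pell (k + 1) + pell k

open Complex Finset

noncomputable def sq2 : ℂ := (Real.sqrt 2 : ℝ)

lemma sq2_sq : sq2 ^ 2 = 2 := by
  have : Real.sqrt 2 ^ 2 = 2 := Real.sq_sqrt (by norm_num)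
  rw [sq2]; exact_mod_cast congrArg (Complex.ofReal) this

lemma pell_binet (n : ℕ) :
    (pell n : ℂ) * (2 * sq2) = (1 + sq2) ^ n - (1 - sq2) ^ n := by
  have key : ∀ n : ℕ, (pell n : ℂ) * (2 * sq2) = (1 + sq2) ^ n - (1 - sq2) ^ n ∧
      (pell (n+1) : ℂ) * (2 * sq2) = (1 + sq2) ^ (n+1) - (1 - sq2) ^ (n+1) := by
    intro n
    induction n with
    | zero => constructor <;> simp [pell] <;> ring
    | succ k ih =>
      refine ⟨ih.2, ?_⟩
      have hp : (pell (k+2) : ℂ) = 2 * (pell (k+1) : ℂ) + (pell k : ℂ) := by norm_cast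
      rw [hp]
      linear_combination 2 * ih.2 + ih.1 + ((1 - sq2)^k - (1 + sq2)^k) * sq2_sq
  exact (key n).1

/-- For `n ≥ 1`, the `n`-th Pell number has the complex factorization
`P_n = ∏_{k=1}^{n-1} (2 - 2i·cos(kπ/n))`. -/
theorem pell_complex_factorization (n : ℕ) (hn : 1 ≤ n) :
    (pell n : ℂ) =
      ∏ k ∈ Finset.Icc 1 (n - 1),
        (2 - 2 * Complex.I * (Real.cos ((k : ℝ) * Real.pi / (n : ℝ)) : ℂ)) := by
  obtain ⟨m, rfl⟩ : ∃ m, n = m + 1 := ⟨n - 1, by omega⟩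
  simp only [Nat.add_sub_cancel]
  set N := m + 1 with hN
  set ζ : ℂ := Complex.exp (Real.pi * I / N) with hζdef
  have hN0 : (N : ℂ) ≠ 0 := by exact Nat.cast_ne_zero.2 (Nat.succ_ne_zero m)
  have hζ : IsPrimitiveRoot ζ (2 * N) := by
    have h := Complex.isPrimitiveRoot_exp (2 * N) (by omega)
    have harg : 2 * (Real.pi : ℂ) * I / ((2 * N : ℕ) : ℂ) = Real.pi * I / N := by
      have hm0 : ((m : ℂ) + 1) ≠ 0 := by
        exact_mod_cast (Nat.cast_ne_zero (R := ℂ)).2 (Nat.succ_ne_zero m)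
      push_cast
      field_simp
    rwa [harg] at h
  set α : ℂ := -I * (1 + sq2) with hαdef
  have hprod : α ^ (2 * N) - 1 = ∏ i ∈ range (2 * N), (α - ζ ^ i) := by
    have hpoly := X_pow_sub_C_eq_prod hζ (by omega) (one_pow (2 * N))
    have h2 := congrArg (Polynomial.eval α) hpoly
    simpa [Polynomial.eval_prod] using h2
  have hζk : ∀ k : ℕ, ζ ^ k = Complex.exp (k * (Real.pi * I / N)) := by
    intro k
    rw [hζdef, ← Complex.exp_nat_mul]
  have hζN : ζ ^ N = -1 := by
    rw [hζk, mul_div_cancel₀ _ hN0, Complex.exp_pi_mul_I]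
  have hζ2N : ∀ k : ℕ, k ≤ N → ζ ^ (2 * N - k) = Complex.exp (-(k * (Real.pi * I / N))) := by
    intro k hk
    rw [hζk]
    rw [show ((2 * N - k : ℕ) : ℂ) = 2 * N - k by
      push_cast [Nat.cast_sub (by omega : k ≤ 2*N)]; ring]
    rw [show (2 * (N:ℂ) - k) * (Real.pi * I / N) = 2 * Real.pi * I + -(k * (Real.pi * I / N)) by
      field_simp; ring]
    rw [Complex.exp_add, Complex.exp_two_pi_mul_I, one_mul]
  -- per-factor identity
  have hfac : ∀ k ∈ Icc 1 m,
      (2 - 2 * Complex.I * ((Real.cos ((k : ℝ) * Real.pi / ((N : ℕ) : ℝ)) : ℝ) : ℂ))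
        = (1 - sq2) * ((α - ζ ^ k) * (α - ζ ^ (2 * N - k))) := by
    intro k hk
    rw [mem_Icc] at hk
    have hsum : ζ ^ k + ζ ^ (2 * N - k)
        = 2 * ((Real.cos ((k : ℝ) * Real.pi / ((N : ℕ) : ℝ)) : ℝ) : ℂ) := by
      rw [hζk k, hζ2N k (by omega)]
      have hx : (k : ℂ) * ((Real.pi : ℂ) * I / N) = (((k : ℝ) * Real.pi / ((N : ℕ) : ℝ) : ℝ) : ℂ) * I := by
        push_cast; ring
      rw [hx, Complex.ofReal_cos, ← neg_mul, ← Complex.two_cos]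
    have hmul : ζ ^ k * ζ ^ (2 * N - k) = 1 := by
      rw [← pow_add, show k + (2 * N - k) = 2 * N by omega]
      exact hζ.pow_eq_one
    set c : ℂ := ((Real.cos ((k : ℝ) * Real.pi / ((N : ℕ) : ℝ)) : ℝ) : ℂ)
    rw [hαdef]
    linear_combination ((1 - sq2) * (-I * (1 + sq2))) * hsum - (1 - sq2) * hmul
      + ((1 + sq2) * I ^ 2 + 2 * c * I) * sq2_sq + (1 + sq2) * Complex.I_sq
  rw [Finset.prod_congr rfl hfac]
  rw [Finset.prod_mul_distrib, Finset.prod_const, Finset.prod_mul_distrib]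
  rw [Nat.card_Icc, Nat.add_sub_cancel]
  -- reindex second product
  have himg : Icc (N + 1) (2 * m + 1) = Finset.image (fun k => 2 * N - k) (Icc 1 m) := by
    ext x
    simp only [mem_Icc, mem_image]
    constructor
    · intro h; exact ⟨2 * N - x, by omega, by omega⟩
    · rintro ⟨a, ha, rfl⟩; omega
  have hreidx : ∏ k ∈ Icc 1 m, (α - ζ ^ (2 * N - k)) = ∏ k ∈ Icc (N + 1) (2 * m + 1), (α - ζ ^ k) := by
    rw [himg, Finset.prod_image]
    intro a ha b hb hab
    rw [mem_coe, mem_Icc] at ha hb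
    simp only at hab
    omega
  rw [hreidx]
  -- split range (2N)
  have hset : range (2 * N) = insert 0 (insert N (Icc 1 m ∪ Icc (N + 1) (2 * m + 1))) := by
    ext x
    simp only [mem_range, mem_insert, mem_union, mem_Icc]
    omega
  have hsplit : α ^ (2 * N) - 1
      = (α - 1) * ((α + 1) * ((∏ k ∈ Icc 1 m, (α - ζ ^ k)) * ∏ k ∈ Icc (N + 1) (2 * m + 1), (α - ζ ^ k))) := by
    rw [hprod, hset]
    rw [Finset.prod_insert (by simp only [mem_insert, mem_union, mem_Icc]; omega)]
    rw [Finset.prod_insert (by simp only [mem_union, mem_Icc]; omega)]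
    rw [Finset.prod_union (by
      rw [Finset.disjoint_left]
      intro a ha hb
      rw [mem_Icc] at ha hb
      omega)]
    rw [pow_zero, hζN]
    ring
  -- final algebra
  have hβγ : (1 - sq2) * (1 + sq2) = -1 := by linear_combination -sq2_sq
  have hα2 : α ^ 2 = -(1 + sq2) ^ 2 := by
    rw [hαdef]; linear_combination (1 + sq2) ^ 2 * Complex.I_sq
  have hfact : (α - 1) * (α + 1) = -(2 * sq2) * (1 + sq2) := by
    rw [hαdef]; linear_combination sq2_sq + (1 + sq2) ^ 2 * Complex.I_sq
  have hne : (α - 1) * (α + 1) ≠ 0 := by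
    rw [hfact]
    have h2 : sq2 ≠ 0 := by
      rw [sq2]
      exact_mod_cast Complex.ofReal_ne_zero.2 (by positivity)
    have h3 : (1 : ℂ) + sq2 ≠ 0 := by
      rw [sq2, show (1 : ℂ) + (Real.sqrt 2 : ℝ) = ((1 + Real.sqrt 2 : ℝ) : ℂ) by push_cast; ring]
      exact Complex.ofReal_ne_zero.2 (by positivity)
    apply mul_ne_zero
    · simp only [neg_ne_zero]
      exact mul_ne_zero two_ne_zero h2
    · exact h3
  apply mul_right_cancel₀ hne
  rw [mul_assoc, mul_assoc]
  rw [show (∏ k ∈ Icc 1 m, (α - ζ ^ k)) * ((∏ k ∈ Icc (N + 1) (2 * m + 1), (α - ζ ^ k)) * ((α - 1) * (α + 1)))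
      = (α - 1) * ((α + 1) * ((∏ k ∈ Icc 1 m, (α - ζ ^ k)) * ∏ k ∈ Icc (N + 1) (2 * m + 1), (α - ζ ^ k))) from by
    ring]
  rw [← hsplit, hfact, pow_mul, hα2]
  have hbin := pell_binet N
  have e1 : ((-(1 + sq2) ^ 2 : ℂ)) ^ N = (1 - sq2) ^ N * (1 + sq2) ^ (3 * N) := by
    have e0 : (-(1 + sq2) ^ 2 : ℂ) = (1 - sq2) * (1 + sq2) ^ 3 := by
      linear_combination (1 + sq2) ^ 2 * sq2_sq
    rw [e0, mul_pow, ← pow_mul]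
  rw [e1, hN]
  rw [show pell N = pell (m + 1) from by rw [hN]] at hbin
  rw [hN] at hbin
  have hodd : (1 - sq2) ^ (2 * m + 1) * (1 + sq2) ^ (2 * m + 1) = -1 := by
    rw [← mul_pow, hβγ]
    exact Odd.neg_one_pow ⟨m, by ring⟩
  linear_combination (-(1 + sq2)) * hbin + (-(1 + sq2) ^ (m + 2)) * hodd + ((1 - sq2) ^ m) * hβγ
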